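/- Let Ĝ be the spectral-extremal gem-free graph as above with extremal vertex û, and suppose u_1, u_2, u_3 ∈ N_+(û) induce a triangle. If none of u_1, u_2, u_3 has a neighbor outside N[û], then x_{u_i} < (10/31) x_{û} for each i, where x is the Perron vector of Ĝ. -/

import Mathlib

open scoped Classical
open SimpleGraph Matrix

def ContainsCopy {α β : Type*} (H : SimpleGraph α) (G : SimpleGraph β) : Prop :=
  ∃ f : α ↪ β, ∀ a b, H.Adj a b → G.Adj (f a) (f b)

def gem : SimpleGraph (Fin 5) :=
  SimpleGraph.fromRel (fun a b => (b.val = a.val + 1 ∧ b.val ≤ 3) ∨ b = 4)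

def bookS (k : ℕ) : SimpleGraph (Fin 2 ⊕ Fin k) :=
  SimpleGraph.fromRel (fun a _ => a.isLeft = true)

def pendantS (s t : ℕ) : SimpleGraph (Fin 2 ⊕ (Fin s ⊕ Fin t)) :=
  SimpleGraph.fromRel (fun a b =>
    match a, b with
    | Sum.inl _, Sum.inl _ => True
    | Sum.inl _, Sum.inr (Sum.inl _) => True
    | Sum.inl i, Sum.inr (Sum.inr _) => i = 0
    | _, _ => False)

def starG (r : ℕ) : SimpleGraph (Fin (r + 1)) :=
  SimpleGraph.fromRel (fun a _ => a = 0)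

noncomputable def specRad {V : Type*} [Fintype V] (G : SimpleGraph V) : ℝ :=
  sSup {μ : ℝ | Module.End.HasEigenvalue (Matrix.mulVecLin (G.adjMatrix ℝ)) μ}

noncomputable def edgeCount {V : Type*} [Fintype V] (G : SimpleGraph V) : ℕ :=
  G.edgeFinset.card

noncomputable def edgesIn {V : Type*} [Fintype V] (G : SimpleGraph V) (S : Finset V) : ℕ :=
  (G.edgeFinset.filter (fun e => ∀ v ∈ e, v ∈ S)).card

noncomputable def N0 {V : Type*} [Fintype V] (G : SimpleGraph V) (u : V) : Finset V :=
  (G.neighborFinset u).filter (fun v => ∀ w ∈ G.neighborFinset u, ¬ G.Adj v w)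

noncomputable def Nplus {V : Type*} [Fintype V] (G : SimpleGraph V) (u : V) : Finset V :=
  G.neighborFinset u \ N0 G u

noncomputable def Wset {V : Type*} [Fintype V] (G : SimpleGraph V) (u : V) : Finset V :=
  Finset.univ \ insert u (G.neighborFinset u)

def InFamily (m : ℕ) {V : Type*} [Fintype V] (G : SimpleGraph V) : Prop :=
  ¬ ContainsCopy gem G ∧ edgeCount G = m ∧ (∀ v : V, ∃ w, G.Adj v w) ∧
    ¬ Nonempty (G ≃g bookS ((m - 1) / 2))

def MaxInFamily (m : ℕ) {V : Type*} [Fintype V] (G : SimpleGraph V) : Prop :=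
  InFamily m G ∧ ∀ (n : ℕ) (H : SimpleGraph (Fin n)), InFamily m H → specRad H ≤ specRad G

def IsCutVertex {V : Type*} (G : SimpleGraph V) (v : V) : Prop :=
  ∃ a b : {x : V // x ≠ v}, G.Reachable a.1 b.1 ∧
    ¬ (G.induce {x : V | x ≠ v}).Reachable a b

/-! ### Auxiliary development for the proof -/

section Aux

-- The comparison graph: K₂ ∨ 10K₁ with two pendant vertices at vertex 0,
-- together with j disjoint edges.
abbrev Vt (j : ℕ) := Fin 14 ⊕ (Fin j × Fin 2)

def fadj (a b : Fin 14) : Prop :=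
  a ≠ b ∧ (a = 0 ∨ b = 0 ∨ (a = 1 ∧ b.val ≤ 11) ∨ (b = 1 ∧ a.val ≤ 11))

instance : DecidableRel fadj := fun _ _ => inferInstanceAs (Decidable (_ ∧ _))

def hrelB (j : ℕ) : Vt j → Vt j → Bool
  | .inl a, .inl b => a == 0 || (a == 1 && decide (b.val ≤ 11))
  | .inr (i, _), .inr (i', _) => i == i'
  | _, _ => false

def HH (j : ℕ) : SimpleGraph (Vt j) := SimpleGraph.fromRel (fun v w => hrelB j v w = true)

instance (j : ℕ) : DecidableRel (HH j).Adj := fun v w =>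
  inferInstanceAs (Decidable (v ≠ w ∧ (hrelB j v w = true ∨ hrelB j w v = true)))

instance : DecidableRel gem.Adj := fun v w =>
  inferInstanceAs (Decidable (v ≠ w ∧ (_ ∨ _)))

instance (k : ℕ) : DecidableRel (bookS k).Adj := fun v w =>
  inferInstanceAs (Decidable (v ≠ w ∧ (_ ∨ _)))

lemma HH_adj_inl_inl {j : ℕ} (a b : Fin 14) :
    (HH j).Adj (.inl a) (.inl b) ↔ fadj a b := by
  simp only [HH, SimpleGraph.fromRel_adj, hrelB, fadj, Bool.or_eq_true, Bool.and_eq_true,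
    beq_iff_eq, decide_eq_true_eq, ne_eq, Sum.inl.injEq]
  tauto

lemma HH_adj_inl_inr {j : ℕ} (a : Fin 14) (p : Fin j × Fin 2) :
    ¬ (HH j).Adj (.inl a) (.inr p) := by
  obtain ⟨i, c⟩ := p
  simp [HH, SimpleGraph.fromRel_adj, hrelB]

lemma HH_adj_inr_inr {j : ℕ} (i i' : Fin j) (c c' : Fin 2) :
    (HH j).Adj (.inr (i, c)) (.inr (i', c')) ↔ i = i' ∧ c ≠ c' := by
  simp only [HH, SimpleGraph.fromRel_adj, hrelB, beq_iff_eq, ne_eq, Sum.inr.injEq, Prod.mk.injEq]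
  constructor
  · rintro ⟨h1, h2 | h2⟩ <;> subst h2 <;> tauto
  · rintro ⟨rfl, h⟩; tauto

lemma HH_nbr_inl {j : ℕ} (a : Fin 14) :
    (HH j).neighborFinset (.inl a)
      = (Finset.univ.filter (fun b => fadj a b)).map ⟨Sum.inl, Sum.inl_injective⟩ := by
  ext w
  cases w with
  | inl b => simp [SimpleGraph.mem_neighborFinset, HH_adj_inl_inl]
  | inr p => simp [SimpleGraph.mem_neighborFinset, HH_adj_inl_inr]

lemma HH_deg_inl {j : ℕ} (a : Fin 14) :
    (HH j).degree (.inl a) = (Finset.univ.filter (fun b => fadj a b)).card := by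
  rw [SimpleGraph.degree, HH_nbr_inl, Finset.card_map]

lemma HH_nbr_inr {j : ℕ} (i : Fin j) (c : Fin 2) :
    (HH j).neighborFinset (.inr (i, c)) = {Sum.inr (i, c.rev)} := by
  ext w
  cases w with
  | inl b =>
      simp only [SimpleGraph.mem_neighborFinset, Finset.mem_singleton]
      constructor
      · intro h; exact absurd h.symm (HH_adj_inl_inr _ _)
      · intro h; exact absurd h (by simp)
  | inr p =>
      obtain ⟨i', c'⟩ := p
      simp only [SimpleGraph.mem_neighborFinset, HH_adj_inr_inr, Finset.mem_singleton,
        Sum.inr.injEq, Prod.mk.injEq]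
      constructor
      · rintro ⟨rfl, h⟩
        exact ⟨rfl, by revert c c' h; decide⟩
      · rintro ⟨rfl, rfl⟩
        exact ⟨rfl, by revert c; decide⟩

lemma HH_deg_inr {j : ℕ} (i : Fin j) (c : Fin 2) :
    (HH j).degree (.inr (i, c)) = 1 := by
  rw [SimpleGraph.degree, HH_nbr_inr]; simp

lemma HH_edgeCount (j : ℕ) : (HH j).edgeFinset.card = 23 + j := by
  have h := SimpleGraph.sum_degrees_eq_twice_card_edges (HH j)
  rw [Fintype.sum_sum_type] at h
  have h1 : ∑ a : Fin 14, (HH j).degree (.inl a) = 46 := by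
    simp only [HH_deg_inl]
    decide
  have h2 : ∑ p : Fin j × Fin 2, (HH j).degree (.inr p) = 2 * j := by
    have hp : ∀ p : Fin j × Fin 2, (HH j).degree (.inr p) = 1 := fun ⟨i, c⟩ => HH_deg_inr i c
    simp [hp, Finset.card_univ, mul_comm]
  rw [h1, h2] at h
  omega

lemma fadj_ne {x y : Fin 14} (h : fadj x y) : x ≠ y := h.1

lemma fadj_other {z y : Fin 14} (h : fadj y z) (h0 : z ≠ 0) (h1 : z ≠ 1) :
    y = 0 ∨ y = 1 := by
  obtain ⟨-, h⟩ := h; tauto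

lemma HH_no_gem (j : ℕ) : ¬ ContainsCopy gem (HH j) := by
  rintro ⟨f, hf⟩
  have hadj4 : ∀ a : Fin 5, a ≠ 4 → (HH j).Adj (f a) (f 4) := by
    intro a ha
    exact hf a 4 ⟨ha, Or.inl (Or.inr rfl)⟩
  have h01 : (HH j).Adj (f 0) (f 1) := hf 0 1 (by decide)
  have h12 : (HH j).Adj (f 1) (f 2) := hf 1 2 (by decide)
  have h23 : (HH j).Adj (f 2) (f 3) := hf 2 3 (by decide)
  obtain ⟨z, hz⟩ : ∃ z : Fin 14, f 4 = .inl z := by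
    rcases h4 : f 4 with z | ⟨i, c⟩
    · exact ⟨z, rfl⟩
    · exfalso
      have g0 := hadj4 0 (by decide); have g1 := hadj4 1 (by decide)
      rw [h4] at g0 g1
      obtain ⟨i0, c0, e0⟩ : ∃ i0 c0, f 0 = .inr (i0, c0) := by
        rcases h0 : f 0 with z0 | ⟨i0, c0⟩
        · rw [h0] at g0; exact absurd g0 (HH_adj_inl_inr _ _)
        · exact ⟨i0, c0, rfl⟩
      obtain ⟨i1, c1, e1⟩ : ∃ i1 c1, f 1 = .inr (i1, c1) := by
        rcases h1 : f 1 with z1 | ⟨i1, c1⟩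
        · rw [h1] at g1; exact absurd g1 (HH_adj_inl_inr _ _)
        · exact ⟨i1, c1, rfl⟩
      rw [e0] at g0; rw [e1] at g1
      rw [HH_adj_inr_inr] at g0 g1
      obtain ⟨rfl, hc0⟩ := g0; obtain ⟨rfl, hc1⟩ := g1
      have hne : f 0 ≠ f 1 := fun h => by have := f.injective h; simp at this
      rw [e0, e1] at hne
      have hcc : c0 ≠ c1 := fun h => hne (by rw [h])
      clear * - hc0 hc1 hcc
      revert c c0 c1
      decide
  have hinl : ∀ a : Fin 5, a ≠ 4 → ∃ g : Fin 14, f a = .inl g := by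
    intro a ha
    rcases h : f a with g | p
    · exact ⟨g, rfl⟩
    · have hth := hadj4 a ha; rw [h, hz] at hth
      exact absurd hth.symm (HH_adj_inl_inr _ _)
  obtain ⟨g0, e0⟩ := hinl 0 (by decide)
  obtain ⟨g1, e1⟩ := hinl 1 (by decide)
  obtain ⟨g2, e2⟩ := hinl 2 (by decide)
  obtain ⟨g3, e3⟩ := hinl 3 (by decide)
  have a0 : fadj g0 z := (HH_adj_inl_inl _ _).1 (by rw [← e0, ← hz]; exact hadj4 0 (by decide))
  have a1 : fadj g1 z := (HH_adj_inl_inl _ _).1 (by rw [← e1, ← hz]; exact hadj4 1 (by decide))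
  have a2 : fadj g2 z := (HH_adj_inl_inl _ _).1 (by rw [← e2, ← hz]; exact hadj4 2 (by decide))
  have a3 : fadj g3 z := (HH_adj_inl_inl _ _).1 (by rw [← e3, ← hz]; exact hadj4 3 (by decide))
  have p01 : fadj g0 g1 := (HH_adj_inl_inl _ _).1 (by rw [← e0, ← e1]; exact h01)
  have p12 : fadj g1 g2 := (HH_adj_inl_inl _ _).1 (by rw [← e1, ← e2]; exact h12)
  have p23 : fadj g2 g3 := (HH_adj_inl_inl _ _).1 (by rw [← e2, ← e3]; exact h23)
  have ne02 : g0 ≠ g2 := by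
    intro h; apply absurd (f.injective (e0.trans ((congrArg _ h).trans e2.symm))); decide
  have ne13 : g1 ≠ g3 := by
    intro h; apply absurd (f.injective (e1.trans ((congrArg _ h).trans e3.symm))); decide
  by_cases hz0 : z = 0
  · subst hz0
    have star : ∀ {x y : Fin 14}, fadj x y → x ≠ 0 → y ≠ 0 → x = 1 ∨ y = 1 := by
      rintro x y ⟨-, h⟩ hx hy; tauto
    have q1 := star p01 (fadj_ne a0) (fadj_ne a1)
    have q2 := star p12 (fadj_ne a1) (fadj_ne a2)
    have q3 := star p23 (fadj_ne a2) (fadj_ne a3)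
    rcases q1 with q1 | q1 <;> rcases q2 with q2 | q2 <;> rcases q3 with q3 | q3 <;>
      first
        | exact ne02 (q1.trans q2.symm)
        | exact ne02 (q2.trans q3.symm)
        | exact ne13 (q1.trans q3.symm)
        | exact fadj_ne p01 (q1.trans q2.symm)
        | exact fadj_ne p12 (q1.trans q2.symm)
        | exact fadj_ne p12 (q2.trans q3.symm)
        | exact fadj_ne p23 (q2.trans q3.symm)
  by_cases hz1 : z = 1
  · subst hz1
    have star : ∀ {x y : Fin 14}, fadj x y → x ≠ 1 → y ≠ 1 → x = 0 ∨ y = 0 := by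
      rintro x y ⟨-, h⟩ hx hy; tauto
    have q1 := star p01 (fadj_ne a0) (fadj_ne a1)
    have q2 := star p12 (fadj_ne a1) (fadj_ne a2)
    have q3 := star p23 (fadj_ne a2) (fadj_ne a3)
    rcases q1 with q1 | q1 <;> rcases q2 with q2 | q2 <;> rcases q3 with q3 | q3 <;>
      first
        | exact ne02 (q1.trans q2.symm)
        | exact ne02 (q2.trans q3.symm)
        | exact ne13 (q1.trans q3.symm)
        | exact fadj_ne p01 (q1.trans q2.symm)
        | exact fadj_ne p12 (q1.trans q2.symm)
        | exact fadj_ne p12 (q2.trans q3.symm)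
        | exact fadj_ne p23 (q2.trans q3.symm)
  · have b0 := fadj_other a0 hz0 hz1
    have b1 := fadj_other a1 hz0 hz1
    have b2 := fadj_other a2 hz0 hz1
    rcases b0 with b0 | b0 <;> rcases b1 with b1 | b1 <;> rcases b2 with b2 | b2 <;>
      first
        | exact fadj_ne p01 (b0.trans b1.symm)
        | exact fadj_ne p12 (b1.trans b2.symm)
        | exact ne02 (b0.trans b2.symm)

lemma HH_no_isolated (j : ℕ) : ∀ v : Vt j, ∃ w, (HH j).Adj v w := by
  intro v
  rcases v with a | ⟨i, c⟩
  · by_cases h : a = 0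
    · exact ⟨.inl 1, by rw [HH_adj_inl_inl]; subst h; decide⟩
    · exact ⟨.inl 0, by rw [HH_adj_inl_inl]; exact ⟨h, Or.inr (Or.inl rfl)⟩⟩
  · exact ⟨.inr (i, c.rev), by rw [HH_adj_inr_inr]; exact ⟨rfl, by revert c; decide⟩⟩

lemma book_deg_left (k : ℕ) (i : Fin 2) :
    (bookS k).degree (.inl i) = k + 1 := by
  have hnb : (bookS k).neighborFinset (.inl i) = Finset.univ.erase (.inl i) := by
    ext w
    simp only [SimpleGraph.mem_neighborFinset, Finset.mem_erase, Finset.mem_univ, and_true]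
    constructor
    · intro h; exact h.ne'
    · intro h; exact ⟨Ne.symm h, Or.inl rfl⟩
  rw [SimpleGraph.degree, hnb, Finset.card_erase_of_mem (Finset.mem_univ _),
    Finset.card_univ, Fintype.card_sum, Fintype.card_fin, Fintype.card_fin]
  omega

lemma book_deg_right (k : ℕ) (r : Fin k) :
    (bookS k).degree (.inr r) = 2 := by
  have hnb : (bookS k).neighborFinset (.inr r) = {Sum.inl 0, Sum.inl 1} := by
    ext w
    rw [SimpleGraph.mem_neighborFinset]
    simp only [SimpleGraph.mem_neighborFinset, bookS, SimpleGraph.fromRel_adj,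
      Finset.mem_insert, Finset.mem_singleton]
    cases w with
    | inl i =>
        have hi : i = 0 ∨ i = 1 := by fin_cases i <;> simp
        constructor
        · intro _
          rcases hi with rfl | rfl
          · exact Or.inl rfl
          · exact Or.inr rfl
        · intro _
          exact ⟨by simp, Or.inr rfl⟩
    | inr r' =>
        simp
  rw [SimpleGraph.degree, hnb, Finset.card_insert_of_notMem (by simp),
    Finset.card_singleton]

lemma HH_deg_pendant (j : ℕ) : (HH j).degree (.inl 12) = 1 := by
  rw [HH_deg_inl]; decide

lemma HH_not_book (j k : ℕ) (hk : 2 ≤ k) : ¬ Nonempty (HH j ≃g bookS k) := by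
  rintro ⟨φ⟩
  have hdeg : (bookS k).degree (φ (.inl 12)) = 1 := by
    rw [← SimpleGraph.card_neighborSet_eq_degree,
      ← Fintype.card_congr (φ.mapNeighborSet (.inl 12)),
      SimpleGraph.card_neighborSet_eq_degree, HH_deg_pendant]
  rcases h : φ (.inl 12) with i | r
  · rw [h, book_deg_left] at hdeg; omega
  · rw [h, book_deg_right] at hdeg; omega

/-! ### the Rayleigh-quotient lower bound -/

lemma le_specRad {V : Type*} [Fintype V] (G : SimpleGraph V) {μ : ℝ}
    (h : Module.End.HasEigenvalue (Matrix.mulVecLin (G.adjMatrix ℝ)) μ) :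
    μ ≤ specRad G :=
  le_csSup ((Module.End.finite_hasEigenvalue _).bddAbove) h

lemma hasEigenvalue_ge_rayleigh {n : Type*} [Fintype n] [DecidableEq n] [Nonempty n]
    (A : Matrix n n ℝ) (hA : A.IsHermitian) (w : n → ℝ) (hw : w ≠ 0) :
    ∃ μ : ℝ, Module.End.HasEigenvalue (Matrix.mulVecLin A) μ ∧
      (∑ i, (A *ᵥ w) i * w i) / (∑ i, w i * w i) ≤ μ := by
  classical
  have hsym := Matrix.isHermitian_iff_isSymmetric.1 hA
  set T : EuclideanSpace ℝ n →ₗ[ℝ] EuclideanSpace ℝ n := Matrix.toEuclideanLin A with hT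
  haveI : Nontrivial (EuclideanSpace ℝ n) := by
    refine ⟨(WithLp.equiv 2 _).symm w, 0, ?_⟩
    intro h
    exact hw (by simpa using congrArg (WithLp.equiv 2 _) h)
  have heg := hsym.hasEigenvalue_iSup_of_finiteDimensional
  set μ : ℝ := ⨆ x : { x : EuclideanSpace ℝ n // x ≠ 0 },
      RCLike.re (inner ℝ (T x) (x : EuclideanSpace ℝ n) : ℝ) / ‖(x : EuclideanSpace ℝ n)‖ ^ 2 with hμ
  refine ⟨μ, ?_, ?_⟩
  · obtain ⟨v, hv⟩ := heg.exists_hasEigenvector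
    have hv1 : T v = μ • v := hv.apply_eq_smul
    refine Module.End.hasEigenvalue_of_hasEigenvector
      (x := WithLp.equiv 2 _ v) ⟨Module.End.mem_eigenspace_iff.2 ?_, ?_⟩
    · have hTv : A *ᵥ (WithLp.equiv 2 _ v) = WithLp.equiv 2 _ (T v) := by
        rw [hT]; rfl
      rw [Matrix.mulVecLin_apply, hTv, hv1]
      rfl
    · intro h
      exact hv.right (by simpa using congrArg (WithLp.equiv 2 _).symm h)
  · set v₀ : EuclideanSpace ℝ n := (WithLp.equiv 2 _).symm w with hv₀
    have hv₀ne : v₀ ≠ 0 := by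
      intro h
      exact hw (by simpa [hv₀] using congrArg (WithLp.equiv 2 _) h)
    have key : RCLike.re (inner ℝ (T v₀) (v₀ : EuclideanSpace ℝ n) : ℝ) / ‖v₀‖ ^ 2
        = (∑ i, (A *ᵥ w) i * w i) / (∑ i, w i * w i) := by
      have h1 : (inner ℝ (T v₀) v₀ : ℝ) = ∑ i, (A *ᵥ w) i * w i := by
        rw [PiLp.inner_apply]
        simp only [RCLike.inner_apply, conj_trivial]
        congr 1
        funext i
        exact mul_comm _ _
      have h2 : ‖v₀‖ ^ 2 = ∑ i, w i * w i := by
        rw [← real_inner_self_eq_norm_sq, PiLp.inner_apply]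
        simp only [RCLike.inner_apply, conj_trivial]
        rfl
      rw [h1, h2]
      rfl
    rw [← key]
    have hbdd : BddAbove (Set.range fun x : { x : EuclideanSpace ℝ n // x ≠ 0 } =>
        RCLike.re (inner ℝ (T x) (x : EuclideanSpace ℝ n) : ℝ) / ‖(x : EuclideanSpace ℝ n)‖ ^ 2) := by
      refine ⟨‖T.toContinuousLinearMap‖, ?_⟩
      rintro _ ⟨x, rfl⟩
      have hx : (0:ℝ) < ‖(x : EuclideanSpace ℝ n)‖ ^ 2 := by
        have hx2 : ‖(x : EuclideanSpace ℝ n)‖ ≠ 0 := norm_ne_zero_iff.2 x.2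
        positivity
      rw [div_le_iff₀ hx]
      calc RCLike.re (inner ℝ (T x) (x : EuclideanSpace ℝ n) : ℝ)
          ≤ ‖T x‖ * ‖(x : EuclideanSpace ℝ n)‖ := by
            simpa using real_inner_le_norm (T x) (x : EuclideanSpace ℝ n)
        _ ≤ (‖T.toContinuousLinearMap‖ * ‖(x : EuclideanSpace ℝ n)‖) * ‖(x : EuclideanSpace ℝ n)‖ := by
            have hop : ‖T x‖ ≤ ‖T.toContinuousLinearMap‖ * ‖(x : EuclideanSpace ℝ n)‖ :=
              T.toContinuousLinearMap.le_opNorm (x : EuclideanSpace ℝ n)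
            exact mul_le_mul_of_nonneg_right hop (norm_nonneg _)
        _ = ‖T.toContinuousLinearMap‖ * ‖(x : EuclideanSpace ℝ n)‖ ^ 2 := by ring
    exact le_ciSup hbdd ⟨v₀, hv₀ne⟩

def fvecN : Fin 14 → ℕ := ![18,17,7,7,7,7,7,7,7,7,7,7,4,4]

noncomputable def fvec : Fin 14 → ℝ := fun a => (fvecN a : ℝ)

lemma sq_nat : (∑ a : Fin 14, fvecN a * fvecN a) = 1135 := by decide

lemma quad_nat :
    (∑ a : Fin 14, ∑ b : Fin 14, if fadj a b then fvecN b * fvecN a else 0) = 5800 := by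
  decide

noncomputable def wv (j : ℕ) : Vt j → ℝ := Sum.elim fvec (fun _ => 0)

lemma wv_ne (j : ℕ) : wv j ≠ 0 := by
  intro h
  have := congrFun h (Sum.inl 0)
  simp [wv, fvec, fvecN] at this

lemma wv_sq (j : ℕ) : ∑ v, wv j v * wv j v = 1135 := by
  rw [Fintype.sum_sum_type]
  have h2 : ∑ p : Fin j × Fin 2, wv j (.inr p) * wv j (.inr p) = 0 := by
    simp [wv]
  rw [h2, add_zero]
  show ∑ a : Fin 14, fvec a * fvec a = 1135
  have hn := sq_nat
  simp only [fvec, ← Nat.cast_mul, ← Nat.cast_sum]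
  exact_mod_cast hn

lemma HH_adjMatrix_hermitian (j : ℕ) : ((HH j).adjMatrix ℝ).IsHermitian := by
  ext v w
  simp [Matrix.conjTranspose_apply, SimpleGraph.adjMatrix_apply, SimpleGraph.adj_comm]

lemma wv_quad (j : ℕ) : ∑ v, (((HH j).adjMatrix ℝ) *ᵥ wv j) v * wv j v = 5800 := by
  rw [Fintype.sum_sum_type]
  have h2 : ∑ p : Fin j × Fin 2, (((HH j).adjMatrix ℝ) *ᵥ wv j) (.inr p) * wv j (.inr p) = 0 := by
    simp [wv]
  rw [h2, add_zero]
  have hrow : ∀ a : Fin 14, (((HH j).adjMatrix ℝ) *ᵥ wv j) (.inl a)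
      = ∑ b : Fin 14, (if fadj a b then (1:ℝ) else 0) * fvec b := by
    intro a
    rw [Matrix.mulVec, dotProduct, Fintype.sum_sum_type]
    have hz : ∑ p : Fin j × Fin 2, ((HH j).adjMatrix ℝ) (.inl a) (.inr p) * wv j (.inr p) = 0 := by
      simp [wv]
    rw [hz, add_zero]
    congr 1
    ext b
    show ((HH j).adjMatrix ℝ) (.inl a) (.inl b) * fvec b = _
    rw [SimpleGraph.adjMatrix_apply]
    congr 1
    by_cases h : fadj a b
    · rw [if_pos ((HH_adj_inl_inl a b).2 h), if_pos h]
    · rw [if_neg (fun hh => h ((HH_adj_inl_inl a b).1 hh)), if_neg h]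
  simp only [hrow]
  show ∑ a : Fin 14, (∑ b : Fin 14, (if fadj a b then (1:ℝ) else 0) * fvec b) * fvec a = 5800
  simp only [Finset.sum_mul, ite_mul, one_mul, zero_mul, fvec]
  have hn := quad_nat
  have hcast : ∀ a b : Fin 14,
      (if fadj a b then (fvecN b : ℝ) * (fvecN a : ℝ) else 0)
        = ((if fadj a b then fvecN b * fvecN a else 0 : ℕ) : ℝ) := by
    intro a b
    by_cases h : fadj a b <;> simp [h]
  simp only [hcast, ← Nat.cast_sum]
  exact_mod_cast hn

lemma eig_irrel {V : Type*} [Fintype V] (G : SimpleGraph V) (i1 i2 : DecidableRel G.Adj)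
    {μ : ℝ} (h : Module.End.HasEigenvalue (Matrix.mulVecLin (@SimpleGraph.adjMatrix ℝ V G i1 _ _)) μ) :
    Module.End.HasEigenvalue (Matrix.mulVecLin (@SimpleGraph.adjMatrix ℝ V G i2 _ _)) μ := by
  have heq : @SimpleGraph.adjMatrix ℝ V G i1 _ _ = @SimpleGraph.adjMatrix ℝ V G i2 _ _ := by
    ext a b
    by_cases hab : G.Adj a b <;> simp [hab]
  rwa [heq] at h

lemma eig_comap {α β : Type*} [Fintype α] [Fintype β] (G : SimpleGraph α) (e : β ≃ α)
    {μ : ℝ} (h : Module.End.HasEigenvalue (Matrix.mulVecLin (G.adjMatrix ℝ)) μ) :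
    Module.End.HasEigenvalue (Matrix.mulVecLin ((G.comap ⇑e).adjMatrix ℝ)) μ := by
  obtain ⟨v, hv⟩ := h.exists_hasEigenvector
  have hv1 : (G.adjMatrix ℝ) *ᵥ v = μ • v := hv.apply_eq_smul
  refine Module.End.hasEigenvalue_of_hasEigenvector (x := v ∘ ⇑e)
    ⟨Module.End.mem_eigenspace_iff.2 ?_, ?_⟩
  · rw [Matrix.mulVecLin_apply]
    funext b
    have step : ((G.comap ⇑e).adjMatrix ℝ *ᵥ (v ∘ ⇑e)) b
        = ∑ a : α, (if G.Adj (e b) a then (1:ℝ) else 0) * v a := by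
      rw [Matrix.mulVec, dotProduct]
      rw [← Equiv.sum_comp e (fun a => (if G.Adj (e b) a then (1:ℝ) else 0) * v a)]
      congr 1
    rw [step]
    have step2 : ∑ a : α, (if G.Adj (e b) a then (1:ℝ) else 0) * v a
        = ((G.adjMatrix ℝ) *ᵥ v) (e b) := by
      rw [Matrix.mulVec, dotProduct]
      congr 1
    rw [step2, hv1]
    rfl
  · intro hcon
    obtain ⟨a, ha⟩ := Function.ne_iff.1 hv.right
    apply ha
    have := congrFun hcon (e.symm a)
    simpa using this

def eqv (j : ℕ) : Vt j ≃ Fin (14 + j * 2) :=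
  ((Equiv.refl (Fin 14)).sumCongr finProdFinEquiv).trans finSumFinEquiv

def HHfin (j : ℕ) : SimpleGraph (Fin (14 + j * 2)) := (HH j).comap ⇑(eqv j).symm

def φiso (j : ℕ) : HH j ≃g HHfin j where
  toEquiv := eqv j
  map_rel_iff' := by
    intro a b
    show (HH j).Adj ((eqv j).symm (eqv j a)) ((eqv j).symm (eqv j b)) ↔ _
    rw [Equiv.symm_apply_apply, Equiv.symm_apply_apply]

lemma HHfin_InFamily (m : ℕ) (hm : 23 ≤ m) : InFamily m (HHfin (m - 23)) := by
  set j := m - 23 with hj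
  refine ⟨?_, ?_, ?_, ?_⟩
  · rintro ⟨f, hf⟩
    refine HH_no_gem j ⟨f.trans ⟨⇑(eqv j).symm, (eqv j).symm.injective⟩, ?_⟩
    intro a b hab
    exact hf a b hab
  · show edgeCount (HHfin j) = m
    rw [edgeCount, ← (φiso j).card_edgeFinset_eq, HH_edgeCount]
    omega
  · intro v
    obtain ⟨w, hw⟩ := HH_no_isolated j ((eqv j).symm v)
    refine ⟨eqv j w, ?_⟩
    show (HH j).Adj ((eqv j).symm v) ((eqv j).symm (eqv j w))
    rwa [Equiv.symm_apply_apply]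
  · rintro ⟨ψ⟩
    exact HH_not_book j ((m - 1) / 2) (by omega) ⟨(φiso j).trans ψ⟩

lemma specRad_HHfin_gt (j : ℕ) : (51:ℝ)/10 < specRad (HHfin j) := by
  obtain ⟨μ, hμ, hge⟩ :=
    hasEigenvalue_ge_rayleigh ((HH j).adjMatrix ℝ) (HH_adjMatrix_hermitian j) (wv j) (wv_ne j)
  rw [wv_quad, wv_sq] at hge
  have h51 : (51:ℝ)/10 < μ := lt_of_lt_of_le (by norm_num) hge
  have hc : Module.End.HasEigenvalue (Matrix.mulVecLin ((HHfin j).adjMatrix ℝ)) μ :=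
    eig_comap (HH j) (eqv j).symm (eig_irrel _ _ _ hμ)
  exact lt_of_lt_of_le h51 (le_specRad _ hc)

end Aux

theorem stmt10 {V : Type*} [Fintype V] (G : SimpleGraph V) (m : ℕ)
    (hodd : Odd m) (hm : 23 ≤ m) (hmax : MaxInFamily m G)
    (x : V → ℝ) (hx : ∀ v, 0 < x v)
    (heig : G.adjMatrix ℝ *ᵥ x = specRad G • x)
    (u : V) (hu : ∀ v, x v ≤ x u)
    (u₁ u₂ u₃ : V) (h1 : u₁ ∈ Nplus G u) (h2 : u₂ ∈ Nplus G u) (h3 : u₃ ∈ Nplus G u)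
    (h12 : G.Adj u₁ u₂) (h13 : G.Adj u₁ u₃) (h23 : G.Adj u₂ u₃)
    (hW : ∀ i ∈ ({u₁, u₂, u₃} : Finset V), ∀ w, G.Adj i w →
      w ∈ insert u (G.neighborFinset u)) :
    x u₁ < 10 / 31 * x u ∧ x u₂ < 10 / 31 * x u ∧ x u₃ < 10 / 31 * x u := by
  -- the spectral radius is large
  have hρ : (51:ℝ)/10 < specRad G := by
    have hfam := HHfin_InFamily m hm
    have hle := hmax.2 (14 + (m - 23) * 2) (HHfin (m - 23)) hfam
    exact lt_of_lt_of_le (specRad_HHfin_gt (m - 23)) hle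
  -- basic adjacency facts
  have hu1 : G.Adj u u₁ := (SimpleGraph.mem_neighborFinset _ _ _).1 (Finset.mem_sdiff.1 h1).1
  have hu2 : G.Adj u u₂ := (SimpleGraph.mem_neighborFinset _ _ _).1 (Finset.mem_sdiff.1 h2).1
  have hu3 : G.Adj u u₃ := (SimpleGraph.mem_neighborFinset _ _ _).1 (Finset.mem_sdiff.1 h3).1
  -- neighborhood characterization
  have main : ∀ a b c : V, G.Adj u a → G.Adj u b → G.Adj u c →
      G.Adj a b → G.Adj a c → G.Adj b c →
      (∀ w, G.Adj a w → w ∈ insert u (G.neighborFinset u)) →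
      G.neighborFinset a = {u, b, c} := by
    intro a b c hua hub huc hab hac hbc hWa
    ext w
    simp only [SimpleGraph.mem_neighborFinset, Finset.mem_insert, Finset.mem_singleton]
    constructor
    · intro hw
      by_contra hcon
      push_neg at hcon
      obtain ⟨hwu, hwb, hwc⟩ := hcon
      have hw' := hWa w hw
      rw [Finset.mem_insert, SimpleGraph.mem_neighborFinset] at hw'
      rcases hw' with rfl | huw
      · exact hwu rfl
      · refine hmax.1.1 ?_
        have hwa : w ≠ a := fun h => G.loopless.irrefl a (h ▸ hw)
        have hwu' : w ≠ u := hwu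
        have hau : a ≠ u := hua.ne'
        have hbu : b ≠ u := hub.ne'
        have hcu : c ≠ u := huc.ne'
        have habn : a ≠ b := hab.ne
        have hacn : a ≠ c := hac.ne
        have hbcn : b ≠ c := hbc.ne
        refine ⟨⟨![w, a, b, c, u], ?_⟩, ?_⟩
        · intro s t hst
          fin_cases s <;> fin_cases t <;>
            first
              | rfl
              | exact absurd hst hwa
              | exact absurd hst hwa.symm
              | exact absurd hst hwb
              | exact absurd hst hwb.symm
              | exact absurd hst hwc
              | exact absurd hst hwc.symm
              | exact absurd hst hwu'
              | exact absurd hst hwu'.symm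
              | exact absurd hst habn
              | exact absurd hst habn.symm
              | exact absurd hst hacn
              | exact absurd hst hacn.symm
              | exact absurd hst hbcn
              | exact absurd hst hbcn.symm
              | exact absurd hst hau
              | exact absurd hst hau.symm
              | exact absurd hst hbu
              | exact absurd hst hbu.symm
              | exact absurd hst hcu
              | exact absurd hst hcu.symm
        · intro s t hst
          fin_cases s <;> fin_cases t <;>
            first
              | exact absurd hst (by decide)
              | exact hw.symm
              | exact hw
              | exact hab
              | exact hab.symm
              | exact hbc
              | exact hbc.symm
              | exact hac
              | exact hac.symm
              | exact huw.symm
              | exact huw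
              | exact hua.symm
              | exact hua
              | exact hub.symm
              | exact hub
              | exact huc.symm
              | exact huc
    · rintro (rfl | rfl | rfl)
      exacts [hua.symm, hab, hac]
  have hN1 : G.neighborFinset u₁ = {u, u₂, u₃} :=
    main u₁ u₂ u₃ hu1 hu2 hu3 h12 h13 h23 (hW u₁ (by simp))
  have hN2 : G.neighborFinset u₂ = {u, u₁, u₃} :=
    main u₂ u₁ u₃ hu2 hu1 hu3 h12.symm h23 h13 (hW u₂ (by simp))
  have hN3 : G.neighborFinset u₃ = {u, u₁, u₂} :=
    main u₃ u₁ u₂ hu3 hu1 hu2 h13.symm h23.symm h12 (hW u₃ (by simp))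
  -- eigen equations
  have heq : ∀ (a p q : V), G.neighborFinset a = {u, p, q} →
      u ∉ ({p, q} : Finset V) → p ∉ ({q} : Finset V) →
      specRad G * x a = x u + x p + x q := by
    intro a p q hN hu' hp'
    have h := congrFun heig a
    rw [SimpleGraph.adjMatrix_mulVec_apply, hN, Finset.sum_insert hu',
      Finset.sum_insert hp', Finset.sum_singleton] at h
    rw [Pi.smul_apply, smul_eq_mul] at h
    linarith [h]
  have e1 : specRad G * x u₁ = x u + x u₂ + x u₃ :=
    heq u₁ u₂ u₃ hN1 (by simp [hu2.ne, hu3.ne]) (by simp [h23.ne])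
  have e2 : specRad G * x u₂ = x u + x u₁ + x u₃ :=
    heq u₂ u₁ u₃ hN2 (by simp [hu1.ne, hu3.ne]) (by simp [h13.ne])
  have e3 : specRad G * x u₃ = x u + x u₁ + x u₂ :=
    heq u₃ u₁ u₂ hN3 (by simp [hu1.ne, hu2.ne]) (by simp [h12.ne])
  -- equal eigenvector entries on the triangle
  have h12x : x u₁ = x u₂ := by
    have hz : (x u₁ - x u₂) * (specRad G + 1) = 0 := by linear_combination e1 - e2
    rcases mul_eq_zero.1 hz with hz | hz
    · linarith [sub_eq_zero.1 hz]
    · linarith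
  have h13x : x u₁ = x u₃ := by
    have hz : (x u₁ - x u₃) * (specRad G + 1) = 0 := by linear_combination e1 - e3
    rcases mul_eq_zero.1 hz with hz | hz
    · linarith [sub_eq_zero.1 hz]
    · linarith
  have hkey : x u₁ * (specRad G - 2) = x u := by
    rw [← h12x, ← h13x] at e1
    linear_combination e1
  have hfin : x u₁ < 10 / 31 * x u := by
    nlinarith [hx u₁, mul_pos (show (0:ℝ) < specRad G - 51/10 by linarith) (hx u₁)]
  exact ⟨hfin, h12x ▸ hfin, h13x ▸ hfin⟩
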